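/- For the partial AUC in [α,β], the empirical risk equals a max over subsets: R̂_{pAUC(α,β)}(w;S) = max over Z ⊆ S₋ with |Z| = j_β of R̃(w; S₊, Z), where for Z = {z_1,…,z_{j_β}} sorted so wᵀz_1 ≥ … ≥ wᵀz_{j_β}, R̃(w;S₊,Z) = (1/(m(j_β−j_α))) Σ_{i=1}^m Σ_{j=j_α+1}^{j_β} 1[wᵀx⁺_i ≤ wᵀz_j], and R̂_{pAUC(α,β)}(w;S) = (1/(m(j_β−j_α))) Σ_{i=1}^m Σ_{j=j_α+1}^{j_β} 1[wᵀx⁺_i ≤ wᵀx⁻_{(j)_w}]. -/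

import Mathlib

/-- Dot product of vectors in ℝ^d. -/
noncomputable def dot {d : ℕ} (w x : Fin d → ℝ) : ℝ := ∑ l, w l * x l

/-- The j-th largest (1-indexed) of the n negative scores wᵀx⁻_l. -/
noncomputable def kthScore {n d : ℕ} (w : Fin d → ℝ) (xn : Fin n → Fin d → ℝ) (j : ℕ) : ℝ :=
  (((Finset.univ : Finset (Fin n)).val.map fun l => dot w (xn l)).sort (· ≤ ·)).getD (n - j) 0

lemma getD_drop' (L : List ℝ) (k i : ℕ) (h : k + i < L.length) :
    (L.drop k).getD i 0 = L.getD (k + i) 0 := by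
  rw [List.getD_eq_getElem _ 0 (by rw [List.length_drop]; omega),
    List.getD_eq_getElem _ 0 h, List.getElem_drop]

lemma sorted_le_getElem' (L : List ℝ) (hL : L.Pairwise (· ≤ ·)) {i j : ℕ} (hij : i ≤ j)
    (hj : j < L.length) : L[i]'(by omega) ≤ L[j] := by
  rcases eq_or_lt_of_le hij with rfl | h
  · exact le_rfl
  · exact List.pairwise_iff_getElem.1 hL i j _ _ h

lemma countP_ge_of_sorted (L : List ℝ) (hL : L.Pairwise (· ≤ ·)) (i : ℕ) (hi : i < L.length) :
    L.length - i ≤ L.countP (fun x => decide (L[i] ≤ x)) := by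
  have h1 : L = L.take i ++ L.drop i := (List.take_append_drop i L).symm
  have h2 : (L.drop i).countP (fun x => decide (L[i] ≤ x)) = (L.drop i).length := by
    apply List.countP_eq_length.2
    intro x hx
    obtain ⟨k, hk, hke⟩ := List.mem_iff_getElem.1 hx
    have hik : i + k < L.length := by
      have := hk; simp [List.length_drop] at this; omega
    have : L[i] ≤ (L.drop i)[k] := by
      rw [List.getElem_drop]
      exact sorted_le_getElem' L hL (Nat.le_add_right i k) hik
    simp [hke ▸ this]
  calc L.length - i = (L.drop i).length := by simp
    _ = (L.drop i).countP _ := h2.symm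
    _ ≤ (L.take i ++ L.drop i).countP (fun x => decide (L[i] ≤ x)) := by
        rw [List.countP_append]; omega
    _ = _ := by rw [← h1]

lemma kth_largest_le (s t : Multiset ℝ) (h : s ≤ t) (j : ℕ) (hj1 : 1 ≤ j)
    (hj2 : j ≤ Multiset.card s) :
    (s.sort (· ≤ ·)).getD (Multiset.card s - j) 0 ≤
      (t.sort (· ≤ ·)).getD (Multiset.card t - j) 0 := by
  set Ls := s.sort (· ≤ ·) with hLs
  set Lt := t.sort (· ≤ ·) with hLt
  have hlens : Ls.length = Multiset.card s := s.length_sort _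
  have hlent : Lt.length = Multiset.card t := t.length_sort _
  have hst : Multiset.card s ≤ Multiset.card t := Multiset.card_le_card h
  have hiL : Multiset.card s - j < Ls.length := by omega
  have hkL : Multiset.card t - j < Lt.length := by omega
  rw [List.getD_eq_getElem Ls 0 hiL, List.getD_eq_getElem Lt 0 hkL]
  set a := Ls[Multiset.card s - j] with ha
  by_contra hcon
  push_neg at hcon
  have hcs : j ≤ s.countP (fun x => a ≤ x) := by
    have h0 := countP_ge_of_sorted Ls (s.pairwise_sort _) (Multiset.card s - j) hiL
    rw [← ha] at h0
    have : s.countP (fun x => a ≤ x) = Ls.countP (fun x => decide (a ≤ x)) := by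
      conv_lhs => rw [← s.sort_eq (· ≤ ·)]
      exact Multiset.coe_countP _ _
    rw [this]; omega
  have hct : j ≤ t.countP (fun x => a ≤ x) :=
    le_trans hcs (Multiset.countP_le_of_le _ h)
  set k := Multiset.card t - j with hk
  have h1 : Lt = Lt.take (k+1) ++ Lt.drop (k+1) := (List.take_append_drop _ Lt).symm
  have h2 : (Lt.take (k+1)).countP (fun x => decide (a ≤ x)) = 0 := by
    apply List.countP_eq_zero.2
    intro x hx
    obtain ⟨i, hi, hie⟩ := List.mem_iff_getElem.1 hx
    have hik : i ≤ k := by have := (List.length_take : (Lt.take (k+1)).length = _) ▸ hi; omega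
    have : (Lt.take (k+1))[i] ≤ Lt[k] := by
      rw [List.getElem_take]
      exact sorted_le_getElem' Lt (t.pairwise_sort _) hik hkL
    have hxa : x < a := lt_of_le_of_lt (hie ▸ this) hcon
    simp [not_le.2 hxa]
  have h3 : (Lt.drop (k+1)).countP (fun x => decide (a ≤ x)) ≤ j - 1 := by
    calc _ ≤ (Lt.drop (k+1)).length := List.countP_le_length
      _ ≤ j - 1 := by simp; omega
  have hfin : t.countP (fun x => a ≤ x) ≤ j - 1 := by
    have he : t.countP (fun x => a ≤ x) = Lt.countP (fun x => decide (a ≤ x)) := by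
      conv_lhs => rw [← t.sort_eq (· ≤ ·)]
      exact Multiset.coe_countP _ _
    rw [he]
    calc Lt.countP _ = (Lt.take (k+1) ++ Lt.drop (k+1)).countP (fun x => decide (a ≤ x)) := by
          rw [← h1]
      _ = _ + _ := List.countP_append
      _ ≤ j - 1 := by omega
  omega

lemma top_subset (n jb : ℕ) (hjb1 : 1 ≤ jb) (hjb2 : jb ≤ n) (f : Fin n → ℝ)
    (hf : Function.Injective f) :
    ∃ Z : Finset (Fin n), Z.card = jb ∧
      (Z.val.map f).sort (· ≤ ·) =
        (((Finset.univ : Finset (Fin n)).val.map f).sort (· ≤ ·)).drop (n - jb) := by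
  set M := (Finset.univ : Finset (Fin n)).val.map f with hM
  set L := M.sort (· ≤ ·) with hL
  have hMnd : M.Nodup := Multiset.Nodup.map hf (Finset.univ.nodup)
  have hLM : (L : Multiset ℝ) = M := M.sort_eq _
  have hLnd : L.Nodup := by rw [← Multiset.coe_nodup, hLM]; exact hMnd
  have hLs : L.Pairwise (· ≤ ·) := M.pairwise_sort _
  have hlen : L.length = n := by
    rw [hL, Multiset.length_sort, hM, Multiset.card_map]; simp
  have hidx : n - jb < L.length := by omega
  set c := L[n - jb] with hc
  refine ⟨Finset.univ.filter (fun l => c ≤ f l), ?_, ?_⟩ <;>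
  · have key : (((Finset.univ.filter (fun l => c ≤ f l)) : Finset (Fin n)).val.map f) =
        ((L.drop (n - jb) : List ℝ) : Multiset ℝ) := by
      rw [Finset.filter_val]
      have h1 : (Multiset.filter (fun l => c ≤ f l) Finset.univ.val).map f
          = Multiset.filter (fun x => c ≤ x) M := by
        rw [hM, Multiset.filter_map]
        rfl
      rw [h1, ← hLM, Multiset.filter_coe]
      congr 1
      conv_lhs => rw [← List.take_append_drop (n - jb) L]
      rw [List.filter_append]
      have htake : (L.take (n - jb)).filter (fun x => decide (c ≤ x)) = [] := by
        apply List.filter_eq_nil_iff.2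
        intro x hx
        obtain ⟨i, hi, hie⟩ := List.mem_iff_getElem.1 hx
        have hi' : i < n - jb := by
          have := (List.length_take : (L.take (n - jb)).length = _) ▸ hi; omega
        have hile : (L.take (n - jb))[i] ≤ c := by
          rw [List.getElem_take]
          exact sorted_le_getElem' L hLs (le_of_lt hi') hidx
        have hne : (L.take (n - jb))[i] ≠ c := by
          rw [List.getElem_take, hc]
          intro hcontra
          have := (List.Nodup.getElem_inj_iff hLnd).1 hcontra
          omega
        have : x < c := lt_of_le_of_ne (hie ▸ hile) (hie ▸ hne)
        simp [not_le.2 this]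
      have hdrop : (L.drop (n - jb)).filter (fun x => decide (c ≤ x)) = L.drop (n - jb) := by
        apply List.filter_eq_self.2
        intro x hx
        obtain ⟨i, hi, hie⟩ := List.mem_iff_getElem.1 hx
        have hik : n - jb + i < L.length := by
          have := (List.length_drop : (L.drop (n - jb)).length = _) ▸ hi; omega
        have : c ≤ (L.drop (n - jb))[i] := by
          rw [List.getElem_drop]
          exact sorted_le_getElem' L hLs (Nat.le_add_right _ _) hik
        simp [hie ▸ this]
      rw [htake, hdrop, List.nil_append]
    first
    | rw [Finset.card_def, ← Multiset.card_map f, key, Multiset.coe_card,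
        List.length_drop, hlen]; omega
    | rw [key]
      refine List.Perm.eq_of_pairwise' (Multiset.pairwise_sort _ _) ?_
        (Multiset.coe_eq_coe.1 (Multiset.sort_eq _ _))
      exact hLs.drop

theorem stmt16 (d m n ja jb : ℕ) (hja : ja < jb) (h2 : jb ≤ n)
    (xp : Fin m → Fin d → ℝ) (xn : Fin n → Fin d → ℝ) (w : Fin d → ℝ)
    (hdist : Function.Injective fun j => dot w (xn j)) :
    IsGreatest
      {v : ℝ | ∃ Z : Finset (Fin n), Z.card = jb ∧
        v = (1 / ((m : ℝ) * ((jb : ℝ) - (ja : ℝ)))) *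
              ∑ i, ∑ j ∈ Finset.Icc (ja + 1) jb,
                (if dot w (xp i) ≤
                    ((Z.val.map fun l => dot w (xn l)).sort (· ≤ ·)).getD (jb - j) 0
                  then (1 : ℝ) else 0)}
      ((1 / ((m : ℝ) * ((jb : ℝ) - (ja : ℝ)))) *
        ∑ i, ∑ j ∈ Finset.Icc (ja + 1) jb,
          (if dot w (xp i) ≤ kthScore w xn j then (1 : ℝ) else 0)) := by
  set f : Fin n → ℝ := fun l => dot w (xn l) with hf
  set L := (((Finset.univ : Finset (Fin n)).val.map f).sort (· ≤ ·)) with hLdef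
  have hlen : L.length = n := by
    rw [hLdef, Multiset.length_sort, Multiset.card_map]; simp
  constructor
  · -- membership: the top-jb subset achieves the value
    obtain ⟨Z, hZc, hZs⟩ := top_subset n jb (by omega) h2 f hdist
    refine ⟨Z, hZc, ?_⟩
    congr 1
    apply Finset.sum_congr rfl
    intro i _
    apply Finset.sum_congr rfl
    intro j hj
    simp only [Finset.mem_Icc] at hj
    congr 1
    rw [hZs]
    rw [getD_drop' L (n - jb) (jb - j) (by omega)]
    have hks : (kthScore w xn j) = L.getD (n - j) 0 := rfl
    rw [hks]
    have hidxeq : n - jb + (jb - j) = n - j := by omega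
    rw [hidxeq]
  · -- upper bound
    rintro v ⟨Z, hZc, rfl⟩
    have hco : (0:ℝ) ≤ 1 / ((m : ℝ) * ((jb : ℝ) - (ja : ℝ))) := by
      apply one_div_nonneg.2
      apply mul_nonneg (Nat.cast_nonneg m)
      have : (ja : ℝ) ≤ (jb : ℝ) := by exact_mod_cast le_of_lt hja
      linarith
    apply mul_le_mul_of_nonneg_left _ hco
    apply Finset.sum_le_sum
    intro i _
    apply Finset.sum_le_sum
    intro j hj
    simp only [Finset.mem_Icc] at hj
    have hsub : Z.val.map f ≤ (Finset.univ : Finset (Fin n)).val.map f :=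
      Multiset.map_le_map (Finset.val_le_iff.2 (Finset.subset_univ Z))
    have hcards : Multiset.card (Z.val.map f) = jb := by
      rw [Multiset.card_map]; exact hZc
    have hcardt : Multiset.card ((Finset.univ : Finset (Fin n)).val.map f) = n := by
      rw [Multiset.card_map]; simp
    have hk := kth_largest_le (Z.val.map f) ((Finset.univ : Finset (Fin n)).val.map f)
      hsub j (by omega) (by omega)
    rw [hcards, hcardt] at hk
    have hk' : ((Z.val.map fun l => dot w (xn l)).sort (· ≤ ·)).getD (jb - j) 0 ≤
        kthScore w xn j := hk
    split_ifs with h1 h2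
    · exact le_refl 1
    · exact absurd (le_trans h1 hk') h2
    · norm_num
    · exact le_refl 0
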